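/- Fix real W×W matrices T₁,…,T_{N−1} and E ∈ ℝ. Consider the map 𝔉 sending (V₁,…,V_N) to (U₁,…,U_N), where V₁,…,V_N are real symmetric W×W matrices, U₁ = V₁ − E, and U_k = V_k − E − T_{k−1}ᵗ U_{k−1}^{−1} T_{k−1} for k ≥ 2, defined on the open set of tuples for which U₁,…,U_{N−1} are invertible. Identifying each symmetric matrix with the vector of its entries (v_{p,q})_{1≤p≤q≤W} ∈ ℝ^{W(W+1)/2}, the Jacobian determinant of 𝔉 : ℝ^{N·W(W+1)/2} → ℝ^{N·W(W+1)/2} equals 1 at every point of its domain; in particular 𝔉 is an injective, Lebesgue-measure-preserving map on its domain. -/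

import Mathlib

open Matrix MeasureTheory

/-- Index set for the independent entries of a symmetric `W × W` matrix:
pairs `(p, q)` with `p ≤ q`. -/
abbrev SymIdx (W : ℕ) := {x : Fin W × Fin W // x.1 ≤ x.2}

/-- The symmetric matrix built from a vector of entries `(v_{p,q})_{p ≤ q}`. -/
def toSymm {W : ℕ} (v : SymIdx W → ℝ) : Matrix (Fin W) (Fin W) ℝ :=
  Matrix.of fun p q => if h : p ≤ q then v ⟨(p, q), h⟩ else v ⟨(q, p), (le_total p q).resolve_left h⟩

/-- The Schur complements `U₁, U₂, …` (0-based) built from symmetric-entry vectors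
`v 0, v 1, …` : `U₁ = V₁ - E`, `U_{k+1} = V_{k+1} - E - T_kᵗ U_k⁻¹ T_k`,
where `V_k = toSymm (v (k-1))`. -/
noncomputable def schurFromSym (W : ℕ) (E : ℝ) (T : ℕ → Matrix (Fin W) (Fin W) ℝ)
    (v : ℕ → SymIdx W → ℝ) : ℕ → Matrix (Fin W) (Fin W) ℝ
  | 0 => toSymm (v 0) - E • 1
  | k + 1 => toSymm (v (k + 1)) - E • 1 - (T k)ᵀ * (schurFromSym W E T v k)⁻¹ * T k

/-- Extension of a `Fin N`-indexed tuple of entry vectors to an `ℕ`-indexed one. -/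
def extTuple {W N : ℕ} (x : Fin N → SymIdx W → ℝ) : ℕ → SymIdx W → ℝ :=
  fun j => if h : j < N then x ⟨j, h⟩ else 0

/-- The Schenker change of variables `𝔉 : (V₁, …, V_N) ↦ (U₁, …, U_N)` on tuples of
symmetric matrices, in the entry coordinates `(v_{p,q})_{p ≤ q}`. -/
noncomputable def schurMap (W N : ℕ) (E : ℝ) (T : ℕ → Matrix (Fin W) (Fin W) ℝ)
    (x : Fin N → SymIdx W → ℝ) : Fin N → SymIdx W → ℝ :=
  fun k pq => schurFromSym W E T (extTuple x) k pq.1.1 pq.1.2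

/-- The domain of `𝔉` : the tuples for which `U₁, …, U_{N-1}` are invertible. -/
def schurDomain (W N : ℕ) (E : ℝ) (T : ℕ → Matrix (Fin W) (Fin W) ℝ) :
    Set (Fin N → SymIdx W → ℝ) :=
  {x | ∀ k : ℕ, k + 1 < N → IsUnit (schurFromSym W E T (extTuple x) k).det}

/-! ### Auxiliary lemmas -/

section aux
variable {W N : ℕ}

lemma toSymm_apply_le {v : SymIdx W → ℝ} {p q : Fin W} (h : p ≤ q) :
    toSymm v p q = v ⟨(p, q), h⟩ := by simp [toSymm, h]

lemma toSymm_apply' (v : SymIdx W → ℝ) (pq : SymIdx W) :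
    toSymm v pq.1.1 pq.1.2 = v pq := toSymm_apply_le pq.2

lemma toSymm_isSymm (v : SymIdx W → ℝ) : (toSymm v).IsSymm := by
  ext p q
  rw [transpose_apply]
  unfold toSymm
  rcases le_or_gt q p with h | h
  · rcases eq_or_lt_of_le h with rfl | h'
    · rfl
    · simp [of_apply, dif_pos h, dif_neg (not_le.2 h')]
  · simp [of_apply, dif_pos h.le, dif_neg (not_le.2 h)]

lemma toSymm_entries {A : Matrix (Fin W) (Fin W) ℝ} (hA : A.IsSymm) :
    toSymm (fun pq => A pq.1.1 pq.1.2) = A := by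
  ext p q
  rcases le_or_gt p q with h | h
  · exact toSymm_apply_le h
  · rw [toSymm, of_apply, dif_neg (not_le.2 h)]
    exact hA.apply p q

lemma schur_isSymm (E : ℝ) (T : ℕ → Matrix (Fin W) (Fin W) ℝ) (v : ℕ → SymIdx W → ℝ) :
    ∀ k, (schurFromSym W E T v k).IsSymm
  | 0 => (toSymm_isSymm _).sub (Matrix.isSymm_one.smul E)
  | (k+1) => by
      have ih := schur_isSymm E T v k
      refine ((toSymm_isSymm _).sub (Matrix.isSymm_one.smul E)).sub ?_
      unfold Matrix.IsSymm
      rw [transpose_mul, transpose_mul, transpose_transpose, transpose_nonsing_inv, ih,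
        mul_assoc]

lemma schurFromSym_congr (E : ℝ) (T : ℕ → Matrix (Fin W) (Fin W) ℝ)
    {v w : ℕ → SymIdx W → ℝ} :
    ∀ k, (∀ j, j ≤ k → v j = w j) → schurFromSym W E T v k = schurFromSym W E T w k
  | 0, h => by rw [schurFromSym, schurFromSym, h 0 le_rfl]
  | (k+1), h => by
      rw [schurFromSym, schurFromSym, h (k+1) le_rfl,
        schurFromSym_congr E T k (fun j hj => h j (hj.trans (Nat.le_succ k)))]

end aux

/-! ### Differentiability of matrix entries -/

lemma differentiableAt_matrix_det {X : Type*} [NormedAddCommGroup X] [NormedSpace ℝ X]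
    {n : Type*} [Fintype n] [DecidableEq n] {M : X → Matrix n n ℝ} {x : X}
    (h : ∀ i j, DifferentiableAt ℝ (fun y => M y i j) x) :
    DifferentiableAt ℝ (fun y => (M y).det) x := by
  simp only [Matrix.det_apply']
  exact DifferentiableAt.fun_sum fun σ _ =>
    ((HasFDerivAt.finset_prod
      (fun i _ => (h (σ i) i).hasFDerivAt)).differentiableAt).const_mul _

lemma differentiableAt_matrix_inv {X : Type*} [NormedAddCommGroup X] [NormedSpace ℝ X]
    {n : Type*} [Fintype n] [DecidableEq n] {M : X → Matrix n n ℝ} {x : X}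
    (h : ∀ i j, DifferentiableAt ℝ (fun y => M y i j) x)
    (hdet : IsUnit (M x).det) (i j : n) :
    DifferentiableAt ℝ (fun y => (M y)⁻¹ i j) x := by
  have hadj : DifferentiableAt ℝ (fun y => (M y).adjugate i j) x := by
    simp only [Matrix.adjugate_apply]
    refine differentiableAt_matrix_det (fun a b => ?_)
    simp only [Matrix.updateRow_apply]
    by_cases hab : a = j
    · simp [hab]
    · simp only [if_neg hab]; exact h a b
  simp only [Matrix.inv_def, Ring.inverse_eq_inv', Matrix.smul_apply, smul_eq_mul]
  exact ((differentiableAt_matrix_det h).inv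
    (isUnit_iff_ne_zero.mp hdet)).mul hadj

section diff
variable {W N : ℕ} (E : ℝ) (T : ℕ → Matrix (Fin W) (Fin W) ℝ)

lemma differentiableAt_toSymm_entry (m : ℕ) (hm : m < N) (p q : Fin W)
    (x : Fin N → SymIdx W → ℝ) :
    DifferentiableAt ℝ (fun y : Fin N → SymIdx W → ℝ => toSymm (extTuple y m) p q) x := by
  have hext : (fun y : Fin N → SymIdx W → ℝ => toSymm (extTuple y m) p q)
      = fun y => toSymm (y ⟨m, hm⟩) p q := by
    funext y; rw [extTuple, dif_pos hm]
  rw [hext]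
  unfold toSymm
  by_cases h : p ≤ q
  · simp only [of_apply, dif_pos h]
    fun_prop
  · simp only [of_apply, dif_neg h]
    fun_prop

lemma umap_entry_diff :
    ∀ (k : ℕ), k < N → ∀ (x : Fin N → SymIdx W → ℝ),
      (∀ j, j < k → IsUnit (schurFromSym W E T (extTuple x) j).det) →
      ∀ p q : Fin W,
        DifferentiableAt ℝ (fun y => schurFromSym W E T (extTuple y) k p q) x
  | 0, hk, x, hx, p, q => by
      simp only [schurFromSym, Matrix.sub_apply]
      exact (differentiableAt_toSymm_entry 0 hk p q x).sub_const _
  | (m+1), hk, x, hx, p, q => by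
      have ih := umap_entry_diff m (Nat.lt_of_succ_lt hk) x
        (fun j hj => hx j (hj.trans (Nat.lt_succ_self m)))
      simp only [schurFromSym, Matrix.sub_apply]
      refine DifferentiableAt.sub
        ((differentiableAt_toSymm_entry (m+1) hk p q x).sub_const _) ?_
      simp only [Matrix.mul_apply]
      refine DifferentiableAt.fun_sum fun b _ => DifferentiableAt.mul_const ?_ _
      refine DifferentiableAt.fun_sum fun a _ => DifferentiableAt.const_mul ?_ _
      exact differentiableAt_matrix_inv ih (hx m (Nat.lt_succ_self m)) a b

end diff

/-! ### The correction term and its triangular structure -/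

section G
variable (W : ℕ) (E : ℝ) (T : ℕ → Matrix (Fin W) (Fin W) ℝ) {N : ℕ}

/-- The "correction" part of the Schur map: `U_k = V_k - Gpart k`. -/
noncomputable def Gpart (y : Fin N → SymIdx W → ℝ) : ℕ → Matrix (Fin W) (Fin W) ℝ
  | 0 => E • 1
  | (k+1) => E • 1 + (T k)ᵀ * (schurFromSym W E T (extTuple y) k)⁻¹ * T k

lemma schurMap_eq_sub (N : ℕ) :
    schurMap W N E T = fun x =>
      x - fun (k : Fin N) (pq : SymIdx W) => Gpart W E T x k.val pq.1.1 pq.1.2 := by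
  funext x k pq
  simp only [Pi.sub_apply, schurMap]
  have hx : extTuple x k.val = x k := by
    rw [extTuple, dif_pos k.isLt]
  obtain ⟨kv, hkv⟩ := k
  cases kv with
  | zero =>
      rw [schurFromSym, Gpart, Matrix.sub_apply, hx, toSymm_apply']
  | succ m =>
      rw [schurFromSym, Gpart, Matrix.sub_apply, Matrix.sub_apply, Matrix.add_apply, hx,
        toSymm_apply']
      ring

/-- Projection zeroing out all coordinates `≥ k`. -/
noncomputable def projL (k : ℕ) : (Fin N → SymIdx W → ℝ) →L[ℝ] (Fin N → SymIdx W → ℝ) :=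
  ContinuousLinearMap.pi fun j => if j.val < k then ContinuousLinearMap.proj j else 0

lemma projL_apply (k : ℕ) (y : Fin N → SymIdx W → ℝ) (j : Fin N) :
    projL W (N := N) k y j = if j.val < k then y j else 0 := by
  rw [projL, ContinuousLinearMap.pi_apply]
  by_cases h : j.val < k
  · rw [if_pos h, if_pos h]; rfl
  · rw [if_neg h, if_neg h]; rfl

lemma extTuple_projL (k : ℕ) (y : Fin N → SymIdx W → ℝ) (j : ℕ) (hj : j < k) (hjN : j < N) :
    extTuple (projL W (N := N) k y) j = extTuple y j := by
  rw [extTuple, extTuple, dif_pos hjN, dif_pos hjN, projL_apply, if_pos hj]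

lemma schur_projL (k : ℕ) (hk : k ≤ N) (y : Fin N → SymIdx W → ℝ) (m : ℕ) (hm : m < k) :
    schurFromSym W E T (extTuple (projL W (N := N) k y)) m
      = schurFromSym W E T (extTuple y) m :=
  schurFromSym_congr E T m fun j hj =>
    extTuple_projL W k y j (lt_of_le_of_lt hj hm)
      (lt_of_lt_of_le (lt_of_le_of_lt hj hm) hk)

lemma Gpart_projL (k : ℕ) (hk : k ≤ N) (y : Fin N → SymIdx W → ℝ) :
    Gpart W E T (projL W (N := N) k y) k = Gpart W E T y k := by
  cases k with
  | zero => rfl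
  | succ m => rw [Gpart, Gpart, schur_projL W E T (m+1) hk y m (Nat.lt_succ_self m)]

lemma Gpart_entry_diff (k : ℕ) (hk : k < N) (y₀ : Fin N → SymIdx W → ℝ)
    (hy : ∀ j, j < k → IsUnit (schurFromSym W E T (extTuple y₀) j).det) (p q : Fin W) :
    DifferentiableAt ℝ (fun y => Gpart W E T y k p q) y₀ := by
  cases k with
  | zero => exact differentiableAt_const _
  | succ m =>
      simp only [Gpart, Matrix.add_apply]
      refine (differentiableAt_const _).add ?_
      simp only [Matrix.mul_apply]
      refine DifferentiableAt.fun_sum fun b _ => DifferentiableAt.mul_const ?_ _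
      refine DifferentiableAt.fun_sum fun a _ => DifferentiableAt.const_mul ?_ _
      exact differentiableAt_matrix_inv
        (umap_entry_diff E T m (Nat.lt_of_succ_lt hk) y₀
          (fun j hj => hy j (hj.trans (Nat.lt_succ_self m))))
        (hy m (Nat.lt_succ_self m)) a b

end G

/-! ### Determinant of a triangular linear map -/

lemma det_eq_one_of_triangular {N : ℕ} {ι : Type*} [Fintype ι] [DecidableEq ι]
    (L : (Fin N → ι → ℝ) →ₗ[ℝ] (Fin N → ι → ℝ))
    (hL : ∀ (h : Fin N → ι → ℝ) (k : Fin N), (∀ j, j < k → h j = 0) → L h k = h k) :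
    LinearMap.det L = 1 := by
  classical
  set eι := Fintype.equivFin ι with heι
  set e : (Σ _ : Fin N, ι) ≃ (Fin N ×ₗ Fin (Fintype.card ι)) :=
    (Equiv.sigmaEquivProd (Fin N) ι).trans
      (((Equiv.refl (Fin N)).prodCongr eι).trans toLex) with he
  set b := (Pi.basis fun _ : Fin N => Pi.basisFun ℝ ι).reindex e with hb
  rw [← LinearMap.det_toMatrix b]
  have key : ∀ (j : Fin N) (i : ι) (k : Fin N), ¬ (j < k) →
      L (Pi.single j (Pi.single i 1)) k
        = (Pi.single j (Pi.single i (1:ℝ)) : Fin N → ι → ℝ) k := by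
    intro j i k hjk
    refine hL _ k fun j' hj' => ?_
    exact Pi.single_eq_of_ne (fun hne => hjk (by rw [← hne]; exact hj')) _
  have hentry : ∀ s t : (Σ _ : Fin N, ι),
      (LinearMap.toMatrix b b L) (e s) (e t)
        = L (Pi.single t.1 (Pi.single t.2 1)) s.1 s.2 := by
    intro s t
    rw [LinearMap.toMatrix_apply, hb, Module.Basis.reindex_apply, Module.Basis.repr_reindex_apply,
      e.symm_apply_apply, Pi.basis_apply, Pi.basisFun_apply,
      Pi.basis_repr, Pi.basisFun_repr, e.symm_apply_apply]
  have htri : (LinearMap.toMatrix b b L).BlockTriangular OrderDual.toDual := by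
    intro σ τ hlt
    obtain ⟨s, rfl⟩ : ∃ s, e s = σ := ⟨e.symm σ, e.apply_symm_apply σ⟩
    obtain ⟨t, rfl⟩ : ∃ t, e t = τ := ⟨e.symm τ, e.apply_symm_apply τ⟩
    rw [hentry]
    have hlt' : e s < e t := hlt
    have hcomp : s.1 < t.1 ∨ (s.1 = t.1 ∧ eι s.2 < eι t.2) := by
      have : toLex (s.1, eι s.2) < toLex (t.1, eι t.2) := hlt'
      rwa [Prod.Lex.lt_iff] at this
    rcases hcomp with h1 | ⟨h1, h2⟩
    · rw [key t.1 t.2 s.1 (asymm h1), Pi.single_eq_of_ne (ne_of_lt h1)]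
      rfl
    · rw [key t.1 t.2 s.1 (by rw [h1]; exact lt_irrefl _), h1, Pi.single_eq_same]
      exact Pi.single_eq_of_ne (fun hc => absurd (congrArg eι hc) (ne_of_lt h2)) _
  rw [Matrix.det_of_lowerTriangular _ htri]
  refine Finset.prod_eq_one fun σ _ => ?_
  obtain ⟨s, rfl⟩ : ∃ s, e s = σ := ⟨e.symm σ, e.apply_symm_apply σ⟩
  rw [hentry, key s.1 s.2 s.1 (lt_irrefl _), Pi.single_eq_same, Pi.single_eq_same]

/-! ### Main theorem -/

/-- The Schenker change of variables has Jacobian determinant `1` at every point of its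
domain; in particular it is injective and Lebesgue-measure-preserving on its domain. -/
theorem statement5 (W N : ℕ) (hW : 0 < W) (hN : 0 < N) (E : ℝ)
    (T : ℕ → Matrix (Fin W) (Fin W) ℝ) :
    (∀ x ∈ schurDomain W N E T,
      DifferentiableAt ℝ (schurMap W N E T) x ∧
      LinearMap.det
        ((fderiv ℝ (schurMap W N E T) x :
            (Fin N → SymIdx W → ℝ) →L[ℝ] (Fin N → SymIdx W → ℝ)) :
          (Fin N → SymIdx W → ℝ) →ₗ[ℝ] (Fin N → SymIdx W → ℝ)) = 1) ∧
    Set.InjOn (schurMap W N E T) (schurDomain W N E T) ∧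
    (∀ s ⊆ schurDomain W N E T, MeasurableSet s →
      volume (schurMap W N E T '' s) = volume s) := by
  classical
  set X := (Fin N → SymIdx W → ℝ)
  set φ : Fin N → (Fin N → SymIdx W → ℝ) → (SymIdx W → ℝ) :=
    fun k y pq => Gpart W E T y k.val pq.1.1 pq.1.2 with hφ
  -- Part 1: differentiability and Jacobian 1
  have hmain : ∀ x ∈ schurDomain W N E T,
      DifferentiableAt ℝ (schurMap W N E T) x ∧
      LinearMap.det
        ((fderiv ℝ (schurMap W N E T) x :
            (Fin N → SymIdx W → ℝ) →L[ℝ] (Fin N → SymIdx W → ℝ)) :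
          (Fin N → SymIdx W → ℝ) →ₗ[ℝ] (Fin N → SymIdx W → ℝ)) = 1 := by
    intro x hx
    have hx' : ∀ k : ℕ, k + 1 < N → IsUnit (schurFromSym W E T (extTuple x) k).det := hx
    have hφdiff : ∀ k : Fin N, DifferentiableAt ℝ (φ k) x := by
      intro k
      refine differentiableAt_pi.2 fun pq => ?_
      exact Gpart_entry_diff W E T k.val k.isLt x
        (fun j hj => hx' j (lt_of_le_of_lt hj k.isLt)) pq.1.1 pq.1.2
    have hGdiff : DifferentiableAt ℝ (fun y (k : Fin N) => φ k y) x :=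
      differentiableAt_pi.2 hφdiff
    have hFdiff : DifferentiableAt ℝ (schurMap W N E T) x := by
      rw [schurMap_eq_sub]
      exact differentiableAt_fun_id.sub hGdiff
    refine ⟨hFdiff, ?_⟩
    have hF' : fderiv ℝ (schurMap W N E T) x
        = ContinuousLinearMap.id ℝ (Fin N → SymIdx W → ℝ)
          - fderiv ℝ (fun y (k : Fin N) => φ k y) x := by
      have h1 : HasFDerivAt (fun y : Fin N → SymIdx W → ℝ => y - fun k => φ k y)
          (ContinuousLinearMap.id ℝ (Fin N → SymIdx W → ℝ)
            - fderiv ℝ (fun y (k : Fin N) => φ k y) x) x :=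
        (hasFDerivAt_id x).sub hGdiff.hasFDerivAt
      rw [schurMap_eq_sub]
      exact h1.fderiv
    have htriag : ∀ (h : Fin N → SymIdx W → ℝ) (k : Fin N),
        (∀ j, j < k → h j = 0) → (fderiv ℝ (schurMap W N E T) x) h k = h k := by
      intro h k hh
      have hG' : fderiv ℝ (fun y (k : Fin N) => φ k y) x
          = ContinuousLinearMap.pi (fun k => fderiv ℝ (φ k) x) := fderiv_pi hφdiff
      rw [hF', ContinuousLinearMap.sub_apply, ContinuousLinearMap.id_apply, hG',
        Pi.sub_apply, ContinuousLinearMap.pi_apply]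
      suffices hz : fderiv ℝ (φ k) x h = 0 by rw [hz, sub_zero]
      have hcomp : φ k = (φ k) ∘ (projL W (N := N) k.val) := by
        funext y pq
        show Gpart W E T y k.val pq.1.1 pq.1.2
          = Gpart W E T (projL W (N := N) k.val y) k.val pq.1.1 pq.1.2
        rw [Gpart_projL W E T k.val k.isLt.le y]
      have hdiffP : DifferentiableAt ℝ (φ k) (projL W (N := N) k.val x) := by
        refine differentiableAt_pi.2 fun pq => ?_
        refine Gpart_entry_diff W E T k.val k.isLt _ (fun j hj => ?_) pq.1.1 pq.1.2
        rw [schur_projL W E T k.val k.isLt.le x j hj]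
        exact hx' j (lt_of_le_of_lt hj k.isLt)
      have hchain : HasFDerivAt (φ k)
          ((fderiv ℝ (φ k) (projL W (N := N) k.val x)).comp (projL W (N := N) k.val)) x := by
        have h2 := hdiffP.hasFDerivAt.comp x (projL W (N := N) k.val).hasFDerivAt
        rwa [← hcomp] at h2
      rw [hchain.fderiv, ContinuousLinearMap.comp_apply]
      have hzero : projL W (N := N) k.val h = 0 := by
        funext j
        rw [projL_apply]
        by_cases hj : j.val < k.val
        · rw [if_pos hj]; exact hh j hj
        · rw [if_neg hj]; rfl
      rw [hzero, map_zero]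
    exact det_eq_one_of_triangular _ htriag
  -- Part 2: injectivity
  have hinj : Set.InjOn (schurMap W N E T) (schurDomain W N E T) := by
    intro x hx y hy hxy
    have hU : ∀ k : ℕ, k < N →
        schurFromSym W E T (extTuple x) k = schurFromSym W E T (extTuple y) k := by
      intro k hk
      have h1 := schur_isSymm E T (extTuple x) k
      have h2 := schur_isSymm E T (extTuple y) k
      have hentries : (fun pq : SymIdx W => schurFromSym W E T (extTuple x) k pq.1.1 pq.1.2)
          = fun pq : SymIdx W => schurFromSym W E T (extTuple y) k pq.1.1 pq.1.2 := by
        funext pq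
        exact congrFun (congrFun hxy ⟨k, hk⟩) pq
      rw [← toSymm_entries h1, ← toSymm_entries h2, hentries]
    have key : ∀ m, m < N → toSymm (extTuple x m) = toSymm (extTuple y m) := by
      intro m hm
      cases m with
      | zero =>
          have ex : toSymm (extTuple x 0) = schurFromSym W E T (extTuple x) 0 + E • 1 := by
            rw [schurFromSym]; abel
          have ey : toSymm (extTuple y 0) = schurFromSym W E T (extTuple y) 0 + E • 1 := by
            rw [schurFromSym]; abel
          rw [ex, ey, hU 0 hm]
      | succ m' =>
          have ex : toSymm (extTuple x (m'+1)) = schurFromSym W E T (extTuple x) (m'+1)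
              + E • 1 + (T m')ᵀ * (schurFromSym W E T (extTuple x) m')⁻¹ * T m' := by
            rw [schurFromSym]; abel
          have ey : toSymm (extTuple y (m'+1)) = schurFromSym W E T (extTuple y) (m'+1)
              + E • 1 + (T m')ᵀ * (schurFromSym W E T (extTuple y) m')⁻¹ * T m' := by
            rw [schurFromSym]; abel
          rw [ex, ey, hU (m'+1) hm, hU m' (Nat.lt_of_succ_lt hm)]
    funext k pq
    have hxe : extTuple x k.val = x k := by rw [extTuple, dif_pos k.isLt]
    have hye : extTuple y k.val = y k := by rw [extTuple, dif_pos k.isLt]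
    rw [← hxe, ← hye, ← toSymm_apply' (extTuple x k.val) pq,
      ← toSymm_apply' (extTuple y k.val) pq, key k.val k.isLt]
  refine ⟨hmain, hinj, ?_⟩
  -- Part 3: measure preservation
  intro s hs hsm
  have hd : ∀ z ∈ s, HasFDerivWithinAt (schurMap W N E T)
      (fderiv ℝ (schurMap W N E T) z) s z :=
    fun z hz => ((hmain z (hs hz)).1.hasFDerivAt.hasFDerivWithinAt)
  rw [← lintegral_abs_det_fderiv_eq_addHaar_image volume hsm hd (hinj.mono hs)]
  have hone : ∀ z ∈ s, ENNReal.ofReal |(fderiv ℝ (schurMap W N E T) z).det| = 1 := by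
    intro z hz
    have h2 : (fderiv ℝ (schurMap W N E T) z).det = 1 := (hmain z (hs hz)).2
    rw [h2, abs_one, ENNReal.ofReal_one]
  rw [setLIntegral_congr_fun hsm hone, setLIntegral_one]
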